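/- Let K ⊂ ℝ be the attractor of a self-similar IFS {f_i}_{i=1}^ℓ of contractive similitudes, let t_0 < t_1 < ⋯ < t_m be real numbers, and set K_t = ⋃_{j=0}^m (K + t_j). If there exists a finite set 𝒢 of similitudes on ℝ such that ⋃_{g∈𝒢} g(K_t) = K, then K_t is a self-similar set; indeed K_t is the attractor of the IFS {x ↦ g(x) + t_j : g ∈ 𝒢, 0 ≤ j ≤ m}. -/
import Mathlib


/-- A set `S ⊆ ℝ` is self-similar if it is the attractor (unique nonempty compact
invariant set) of a finite IFS of contractive similitudes on `ℝ`. -/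
def IsSelfSimilar (S : Set ℝ) : Prop :=
  S.Nonempty ∧ IsCompact S ∧
    ∃ (n : ℕ) (r a : Fin n → ℝ), 0 < n ∧ (∀ i, r i ≠ 0 ∧ |r i| < 1) ∧
      S = ⋃ i, (fun x => r i * x + a i) '' S

theorem stmt_3 (ℓ : ℕ) (hℓ : 0 < ℓ) (r a : Fin ℓ → ℝ)
    (hr : ∀ i, r i ≠ 0 ∧ |r i| < 1)
    (K : Set ℝ) (hne : K.Nonempty) (hcpt : IsCompact K)
    (hK : K = ⋃ i, (fun x => r i * x + a i) '' K)
    (m : ℕ) (t : Fin (m + 1) → ℝ) (ht : StrictMono t)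
    (p : ℕ) (g : Fin p → ℝ → ℝ)
    (hg : ∀ q, ∃ c d : ℝ, c ≠ 0 ∧ ∀ x, g q x = c * x + d)
    (hcover : (⋃ q, g q '' (⋃ j, (· + t j) '' K)) = K) :
    IsSelfSimilar (⋃ j, (· + t j) '' K) ∧
      (⋃ j, (· + t j) '' K) =
        ⋃ q, ⋃ j, (fun x => g q x + t j) '' (⋃ j', (· + t j') '' K) := by
  classical
  set Kt : Set ℝ := ⋃ j, (· + t j) '' K with hKt
  -- basic facts
  have hKtne : Kt.Nonempty := by
    obtain ⟨x, hx⟩ := hne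
    exact ⟨x + t 0, Set.mem_iUnion.2 ⟨0, ⟨x, hx, rfl⟩⟩⟩
  have hKtcpt : IsCompact Kt := by
    apply isCompact_iUnion
    intro j
    exact hcpt.image (continuous_id.add continuous_const)
  -- the second conjunct
  have heq : Kt = ⋃ q, ⋃ j, (fun x => g q x + t j) '' Kt := by
    conv_lhs => rw [hKt, ← hcover]
    ext x
    simp only [Set.mem_iUnion, Set.mem_image]
    constructor
    · rintro ⟨j, y, ⟨q, z, hz, rfl⟩, rfl⟩
      exact ⟨q, j, z, hz, rfl⟩
    · rintro ⟨q, j, z, hz, rfl⟩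
      exact ⟨j, g q z, ⟨q, z, hz, rfl⟩, rfl⟩
  refine ⟨⟨hKtne, hKtcpt, ?_⟩, heq⟩
  by_cases hsub : Kt.Subsingleton
  · -- Kt is a single point {s}
    obtain ⟨s, hs⟩ := hKtne
    have hKs : Kt = {s} := hsub.eq_singleton_of_mem hs
    refine ⟨1, fun _ => r ⟨0, hℓ⟩, fun _ => s - r ⟨0, hℓ⟩ * s, one_pos,
      fun _ => hr _, ?_⟩
    rw [hKs]
    ext x
    simp only [Set.mem_iUnion, Set.mem_image, Set.mem_singleton_iff]
    constructor
    · intro hx; exact ⟨⟨0, one_pos⟩, s, rfl, by rw [← hx]; ring⟩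
    · rintro ⟨_, y, rfl, rfl⟩; ring
  · -- Kt has at least two points, so diam Kt > 0 and each g q contracts weakly
    choose c d hc hgcd using hg
    have hbd : Bornology.IsBounded Kt := hKtcpt.isBounded
    have hdiamK : Metric.diam K ≤ Metric.diam Kt := by
      have : (· + t 0) '' K ⊆ Kt := Set.subset_iUnion_of_subset 0 le_rfl
      calc Metric.diam K = Metric.diam ((· + t 0) '' K) :=
            ((isometry_add_right (t 0)).diam_image K).symm
        _ ≤ Metric.diam Kt := Metric.diam_mono this hbd
    have hdpos : 0 < Metric.diam Kt := by
      obtain ⟨x, hx, y, hy, hxy⟩ := Set.not_subsingleton_iff.1 hsub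
      have := Metric.dist_le_diam_of_mem hbd hx hy
      have hd : 0 < dist x y := dist_pos.2 hxy
      linarith
    have hcle : ∀ q, |c q| ≤ 1 := by
      intro q
      have hsubK : g q '' Kt ⊆ K := by
        rw [← hcover]; exact Set.subset_iUnion_of_subset q le_rfl
      have hle : Metric.diam Kt ≤ Metric.diam K / |c q| := by
        apply Metric.diam_le_of_forall_dist_le
          (div_nonneg Metric.diam_nonneg (abs_nonneg _))
        intro x hx y hy
        have h1 : dist (g q x) (g q y) ≤ Metric.diam K :=
          Metric.dist_le_diam_of_mem hcpt.isBounded (hsubK ⟨x, hx, rfl⟩)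
            (hsubK ⟨y, hy, rfl⟩)
        have h2 : dist (g q x) (g q y) = |c q| * dist x y := by
          rw [hgcd q x, hgcd q y, Real.dist_eq, Real.dist_eq]
          rw [← abs_mul]; ring_nf
        rw [le_div_iff₀ (abs_pos.2 (hc q)), mul_comm]
        rw [h2] at h1; linarith [h1]
      have := (le_div_iff₀ (abs_pos.2 (hc q))).1 hle
      -- Metric.diam Kt * |c q| ≤ Metric.diam K ≤ Metric.diam Kt
      nlinarith [hdiamK, hdpos]
    -- build the IFS: indices (i, q, j)
    let e := (Fintype.equivFin (Fin ℓ × Fin p × Fin (m + 1))).symm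
    refine ⟨Fintype.card (Fin ℓ × Fin p × Fin (m + 1)),
      fun i => r (e i).1 * c (e i).2.1,
      fun i => r (e i).1 * d (e i).2.1 + a (e i).1 + t (e i).2.2, ?_, ?_, ?_⟩
    · have hp : 0 < p := by
        rcases Nat.eq_zero_or_pos p with h | h
        · exfalso; subst h
          rw [Set.iUnion_of_empty] at hcover
          exact hne.ne_empty hcover.symm
        · exact h
      simp only [Fintype.card_prod, Fintype.card_fin]
      exact Nat.mul_pos hℓ (Nat.mul_pos hp m.succ_pos)
    · intro i
      refine ⟨mul_ne_zero (hr _).1 (hc _), ?_⟩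
      rw [abs_mul]
      calc |r (e i).1| * |c (e i).2.1| ≤ |r (e i).1| * 1 :=
            mul_le_mul_of_nonneg_left (hcle _) (abs_nonneg _)
        _ = |r (e i).1| := mul_one _
        _ < 1 := (hr _).2
    · -- Kt = ⋃ i, F_i '' Kt
      have key : Kt = ⋃ w : Fin ℓ × Fin p × Fin (m + 1),
          (fun x => r w.1 * c w.2.1 * x + (r w.1 * d w.2.1 + a w.1 + t w.2.2)) '' Kt := by
        conv_lhs => rw [hKt]
        ext x
        simp only [Set.mem_iUnion, Set.mem_image]
        constructor
        · rintro ⟨j, y, hy, rfl⟩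
          rw [hK] at hy
          obtain ⟨i, z, hz, rfl⟩ := by simpa using hy
          -- z ∈ K = ⋃ q g q '' Kt
          rw [← hcover] at hz
          obtain ⟨q, w, hw, rfl⟩ := by simpa using hz
          refine ⟨(i, q, j), w, hw, ?_⟩
          simp only [hgcd q w]; ring
        · rintro ⟨⟨i, q, j⟩, y, hy, rfl⟩
          refine ⟨j, r i * (g q y) + a i, ?_, by rw [hgcd q y]; ring⟩
          rw [hK]
          refine Set.mem_iUnion.2 ⟨i, ⟨g q y, ?_, rfl⟩⟩
          rw [← hcover]
          exact Set.mem_iUnion.2 ⟨q, ⟨y, hy, rfl⟩⟩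
      conv_lhs => rw [key]
      exact (e.surjective.iUnion_comp
        (g := fun w => (fun x => r w.1 * c w.2.1 * x +
          (r w.1 * d w.2.1 + a w.1 + t w.2.2)) '' Kt)).symm
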